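/- Let T be a finite tree with vertex set V and weight function α : E(T) → ℝ, let y be a vertex adjacent to two leaves ∂ and ∂'. Let T' = T \ {∂'} with weight α' equal to α except α'(y,∂) = α(y,∂) + α(y,∂'). Then for every map φ : V(T)\{∂,∂'} → ℤ^d and points x, x' ∈ ℤ^d, writing p_ψ(S) = ∏_{(u,v)∈E(S)} 1/(1+‖ψ(u)−ψ(v)‖^{α(u,v)}), one has p_{φ[∂↦x, ∂'↦x']}(T) ≤ C ( p_{φ[∂↦x]}(T') + p_{φ[∂↦x']}(T') ) for a constant C depending only on the weights. -/

import Mathlib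

/-- Euclidean norm of a point of `ℤ^d`. -/
noncomputable def znorm {d : ℕ} (x : Fin d → ℤ) : ℝ :=
  Real.sqrt (∑ i, ((x i : ℝ)) ^ 2)

/-- Weight of a (oriented) edge set `E` with edge exponents `α` and vertex
labelling `ψ` into `ℤ^d`: the product over edges of `1/(1+‖ψu-ψv‖^{α(u,v)})`. -/
noncomputable def edgesWeight {V : Type*} {d : ℕ} (E : Finset (V × V))
    (α : V × V → ℝ) (ψ : V → (Fin d → ℤ)) : ℝ :=
  ∏ e ∈ E, 1 / (1 + znorm (ψ e.1 - ψ e.2) ^ α e)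

lemma znorm_nonneg {d : ℕ} (x : Fin d → ℤ) : 0 ≤ znorm x := Real.sqrt_nonneg _

lemma cut_min_ord (a b s t : ℝ) (ha : 0 ≤ a) (hb : 0 ≤ b) (hab : a ≤ b) :
    min (1 + a ^ (s + t)) (1 + b ^ (s + t)) ≤ 2 * ((1 + a ^ s) * (1 + b ^ t)) := by
  have has : 0 ≤ a ^ s := Real.rpow_nonneg ha s
  have hbt : 0 ≤ b ^ t := Real.rpow_nonneg hb t
  have hP1 : 1 ≤ (1 + a ^ s) * (1 + b ^ t) :=
    one_le_mul_of_one_le_of_one_le (by linarith) (by linarith)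
  have hPab : a ^ s * b ^ t ≤ (1 + a ^ s) * (1 + b ^ t) := by nlinarith
  have hPa : a ^ s ≤ (1 + a ^ s) * (1 + b ^ t) := by nlinarith
  have hPb : b ^ t ≤ (1 + a ^ s) * (1 + b ^ t) := by nlinarith
  have key : a ^ (s + t) ≤ (1 + a ^ s) * (1 + b ^ t) ∨
      b ^ (s + t) ≤ (1 + a ^ s) * (1 + b ^ t) := by
    rcases eq_or_lt_of_le ha with ha0 | ha0
    · left
      rcases eq_or_ne (s + t) 0 with h | h
      · rw [h, Real.rpow_zero]; exact hP1
      · rw [← ha0, Real.zero_rpow h]; positivity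
    · have hb0 : 0 < b := lt_of_lt_of_le ha0 hab
      rcases le_or_gt 0 t with ht | ht
      · left
        rw [Real.rpow_add ha0]
        calc a ^ s * a ^ t ≤ a ^ s * b ^ t :=
              mul_le_mul_of_nonneg_left (Real.rpow_le_rpow ha hab ht) has
          _ ≤ _ := hPab
      · rcases le_or_gt s 0 with hs | hs
        · right
          rw [Real.rpow_add hb0]
          calc b ^ s * b ^ t ≤ a ^ s * b ^ t :=
                mul_le_mul_of_nonneg_right (Real.rpow_le_rpow_of_nonpos ha0 hab hs) hbt
            _ ≤ _ := hPab
        · rcases le_or_gt 1 a with ha1 | ha1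
          · left
            rw [Real.rpow_add ha0]
            calc a ^ s * a ^ t ≤ a ^ s * 1 :=
                  mul_le_mul_of_nonneg_left
                    (Real.rpow_le_one_of_one_le_of_nonpos ha1 ht.le) has
              _ = a ^ s := mul_one _
              _ ≤ _ := hPa
          · rcases lt_or_ge b 1 with hb1 | hb1
            · right
              rw [Real.rpow_add hb0]
              calc b ^ s * b ^ t ≤ 1 * b ^ t :=
                    mul_le_mul_of_nonneg_right
                      (Real.rpow_le_one hb hb1.le hs.le) hbt
                _ = b ^ t := one_mul _
                _ ≤ _ := hPb
            · rcases le_or_gt 0 (s + t) with hst | hst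
              · left
                exact le_trans (Real.rpow_le_one ha ha1.le hst) hP1
              · right
                exact le_trans (Real.rpow_le_one_of_one_le_of_nonpos hb1 hst.le) hP1
  rcases key with h | h
  · calc min (1 + a ^ (s + t)) (1 + b ^ (s + t)) ≤ 1 + a ^ (s + t) := min_le_left _ _
      _ ≤ 2 * ((1 + a ^ s) * (1 + b ^ t)) := by linarith
  · calc min (1 + a ^ (s + t)) (1 + b ^ (s + t)) ≤ 1 + b ^ (s + t) := min_le_right _ _
      _ ≤ 2 * ((1 + a ^ s) * (1 + b ^ t)) := by linarith

lemma cut_min (a b s t : ℝ) (ha : 0 ≤ a) (hb : 0 ≤ b) :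
    min (1 + a ^ (s + t)) (1 + b ^ (s + t)) ≤ 2 * ((1 + a ^ s) * (1 + b ^ t)) := by
  rcases le_total a b with hab | hab
  · exact cut_min_ord a b s t ha hb hab
  · have := cut_min_ord b a t s hb ha hab
    rw [min_comm, add_comm t s] at this
    rw [mul_comm (1 + a ^ s)]
    exact this

lemma cut_scalar (a b s t : ℝ) (ha : 0 ≤ a) (hb : 0 ≤ b) :
    (1 / (1 + b ^ t)) * (1 / (1 + a ^ s)) ≤
      2 * (1 / (1 + a ^ (s + t)) + 1 / (1 + b ^ (s + t))) := by
  have has : 0 ≤ a ^ s := Real.rpow_nonneg ha s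
  have hbt : 0 ≤ b ^ t := Real.rpow_nonneg hb t
  have hast : 0 ≤ a ^ (s + t) := Real.rpow_nonneg ha _
  have hbst : 0 ≤ b ^ (s + t) := Real.rpow_nonneg hb _
  have hu : (0:ℝ) < 1 + a ^ (s + t) := by linarith
  have hv : (0:ℝ) < 1 + b ^ (s + t) := by linarith
  have hP : (0:ℝ) < (1 + a ^ s) * (1 + b ^ t) := by nlinarith
  have hmin : 0 < min (1 + a ^ (s + t)) (1 + b ^ (s + t)) := lt_min hu hv
  have h1 : (1:ℝ) / ((1 + a ^ s) * (1 + b ^ t)) ≤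
      2 * (1 / min (1 + a ^ (s + t)) (1 + b ^ (s + t))) := by
    have hm2 := cut_min a b s t ha hb
    have h' := one_div_le_one_div_of_le hmin hm2
    calc (1:ℝ) / ((1 + a ^ s) * (1 + b ^ t))
        = 2 * (1 / (2 * ((1 + a ^ s) * (1 + b ^ t)))) := by
          field_simp
      _ ≤ 2 * (1 / min (1 + a ^ (s + t)) (1 + b ^ (s + t))) := by
          exact mul_le_mul_of_nonneg_left h' (by norm_num)
  have h2 : (1:ℝ) / min (1 + a ^ (s + t)) (1 + b ^ (s + t)) ≤
      1 / (1 + a ^ (s + t)) + 1 / (1 + b ^ (s + t)) := by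
    rcases min_cases (1 + a ^ (s + t)) (1 + b ^ (s + t)) with ⟨h, _⟩ | ⟨h, _⟩ <;> rw [h]
    · have : (0:ℝ) ≤ 1 / (1 + b ^ (s + t)) := by positivity
      linarith
    · have : (0:ℝ) ≤ 1 / (1 + a ^ (s + t)) := by positivity
      linarith
  calc (1 / (1 + b ^ t)) * (1 / (1 + a ^ s))
      = 1 / ((1 + a ^ s) * (1 + b ^ t)) := by rw [one_div_mul_one_div, mul_comm]
    _ ≤ 2 * (1 / min (1 + a ^ (s + t)) (1 + b ^ (s + t))) := h1
    _ ≤ 2 * (1 / (1 + a ^ (s + t)) + 1 / (1 + b ^ (s + t))) := by linarith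

/-- The cut operation (Lemma 4.7): if `y` is adjacent to two leaves `p, p'` of
a tree `T` (with oriented edge set `E`), removing the leaf `p'` and adding its
edge weight to that of the edge `(y,p)` bounds the weight of `T`, up to a
constant, by the sum of the weights of the reduced tree with `p` labelled by
`x` and by `x'` respectively. -/
theorem stmt9 {V : Type*} [Fintype V] [DecidableEq V] {d : ℕ}
    (G : SimpleGraph V) [DecidableRel G.Adj] (hG : G.IsTree)
    (E : Finset (V × V)) (hEadj : ∀ e ∈ E, G.Adj e.1 e.2)
    (hEcover : ∀ u v : V, G.Adj u v → (u, v) ∈ E ∨ (v, u) ∈ E)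
    (hEcard : E.card = G.edgeFinset.card)
    (y p p' : V) (hpp' : p ≠ p')
    (hdegp : G.degree p = 1) (hdegp' : G.degree p' = 1)
    (hadj : G.Adj y p) (hadj' : G.Adj y p')
    (hmem : (y, p) ∈ E) (hmem' : (y, p') ∈ E)
    (α : V × V → ℝ) :
    ∃ C : ℝ, 0 < C ∧ ∀ (φ : V → (Fin d → ℤ)) (x x' : Fin d → ℤ),
      edgesWeight E α (Function.update (Function.update φ p x) p' x') ≤
        C * (edgesWeight (E.erase (y, p'))
                (Function.update α (y, p) (α (y, p) + α (y, p')))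
                (Function.update (Function.update φ p x) p' x') +
             edgesWeight (E.erase (y, p'))
                (Function.update α (y, p) (α (y, p) + α (y, p')))
                (Function.update (Function.update φ p x') p' x')) := by
  classical
  have hyp : y ≠ p := hadj.ne
  have hyp' : y ≠ p' := hadj'.ne
  -- injectivity of `Sym2.mk` on `E`
  have hinj : ∀ e ∈ E, ∀ f ∈ E, Sym2.mk e.1 e.2 = Sym2.mk f.1 f.2 → e = f := by
    have hsurj : ∀ b ∈ G.edgeFinset, ∃ a, ∃ _ : a ∈ E, Sym2.mk a.1 a.2 = b := by
      intro b hb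
      induction b with
      | _ u v =>
        have hadjuv : G.Adj u v := by
          rw [SimpleGraph.mem_edgeFinset, SimpleGraph.mem_edgeSet] at hb
          exact hb
        rcases hEcover u v hadjuv with h | h
        · exact ⟨(u, v), h, rfl⟩
        · exact ⟨(v, u), h, Sym2.eq_swap⟩
    intro e he f hf hef
    exact Finset.inj_on_of_surj_on_of_card_le (fun a _ => Sym2.mk a.1 a.2)
      (fun a ha => by
        rw [SimpleGraph.mem_edgeFinset]
        exact (SimpleGraph.mem_edgeSet G).mpr (hEadj a ha))
      hsurj (le_of_eq hEcard) he hf hef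
  have hpy : (p, y) ∉ E := by
    intro h
    have := hinj _ hmem _ h Sym2.eq_swap
    exact hyp (congrArg Prod.fst this)
  have hp'y : (p', y) ∉ E := by
    intro h
    have := hinj _ hmem' _ h Sym2.eq_swap
    exact hyp' (congrArg Prod.fst this)
  -- neighbor sets of the leaves
  have hNp : G.neighborFinset p = {y} := by
    obtain ⟨a, ha⟩ := Finset.card_eq_one.mp (by rw [← hdegp]; rfl)
    have hy : y ∈ G.neighborFinset p := by
      rw [SimpleGraph.mem_neighborFinset]; exact hadj.symm
    rw [ha] at hy ⊢
    rw [Finset.mem_singleton] at hy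
    rw [hy]
  have hNp' : G.neighborFinset p' = {y} := by
    obtain ⟨a, ha⟩ := Finset.card_eq_one.mp (by rw [← hdegp']; rfl)
    have hy : y ∈ G.neighborFinset p' := by
      rw [SimpleGraph.mem_neighborFinset]; exact hadj'.symm
    rw [ha] at hy ⊢
    rw [Finset.mem_singleton] at hy
    rw [hy]
  have hmem2 : (y, p) ∈ E.erase (y, p') := by
    refine Finset.mem_erase.mpr ⟨?_, hmem⟩
    intro h
    exact hpp' (congrArg Prod.snd h)
  -- edges other than (y,p), (y,p') avoid p and p'
  have hrest : ∀ e ∈ (E.erase (y, p')).erase (y, p),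
      e.1 ≠ p ∧ e.2 ≠ p ∧ e.1 ≠ p' ∧ e.2 ≠ p' := by
    intro e he
    obtain ⟨hne1, he'⟩ := Finset.mem_erase.mp he
    obtain ⟨hne2, heE⟩ := Finset.mem_erase.mp he'
    have hadje : G.Adj e.1 e.2 := hEadj e heE
    refine ⟨?_, ?_, ?_, ?_⟩
    · intro h
      have h2 : e.2 ∈ G.neighborFinset p := by
        rw [SimpleGraph.mem_neighborFinset]; rw [h] at hadje; exact hadje
      rw [hNp, Finset.mem_singleton] at h2
      have : e = (p, y) := Prod.ext h h2
      rw [this] at heE; exact hpy heE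
    · intro h
      have h2 : e.1 ∈ G.neighborFinset p := by
        rw [SimpleGraph.mem_neighborFinset]; rw [h] at hadje; exact hadje.symm
      rw [hNp, Finset.mem_singleton] at h2
      exact hne1 (Prod.ext h2 h)
    · intro h
      have h2 : e.2 ∈ G.neighborFinset p' := by
        rw [SimpleGraph.mem_neighborFinset]; rw [h] at hadje; exact hadje
      rw [hNp', Finset.mem_singleton] at h2
      have : e = (p', y) := Prod.ext h h2
      rw [this] at heE; exact hp'y heE
    · intro h
      have h2 : e.1 ∈ G.neighborFinset p' := by
        rw [SimpleGraph.mem_neighborFinset]; rw [h] at hadje; exact hadje.symm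
      rw [hNp', Finset.mem_singleton] at h2
      exact hne2 (Prod.ext h2 h)
  refine ⟨2, by norm_num, ?_⟩
  intro φ x x'
  set s := α (y, p) with hs
  set t := α (y, p') with ht
  set ψ1 := Function.update (Function.update φ p x) p' x' with hψ1
  set ψ2 := Function.update (Function.update φ p x') p' x' with hψ2
  set α' := Function.update α (y, p) (s + t) with hα'
  set R := ∏ e ∈ (E.erase (y, p')).erase (y, p),
      1 / (1 + znorm (ψ1 e.1 - ψ1 e.2) ^ α e) with hR
  have hR0 : 0 ≤ R := Finset.prod_nonneg fun e _ => by
    have h := Real.rpow_nonneg (znorm_nonneg (ψ1 e.1 - ψ1 e.2)) (α e)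
    have h2 : (0:ℝ) < 1 + znorm (ψ1 e.1 - ψ1 e.2) ^ α e := by linarith
    exact le_of_lt (one_div_pos.mpr h2)
  have hψ1y : ψ1 y = φ y := by
    rw [hψ1, Function.update_of_ne hyp', Function.update_of_ne hyp]
  have hψ2y : ψ2 y = φ y := by
    rw [hψ2, Function.update_of_ne hyp', Function.update_of_ne hyp]
  have hψ1p : ψ1 p = x := by
    rw [hψ1, Function.update_of_ne hpp', Function.update_self]
  have hψ2p : ψ2 p = x' := by
    rw [hψ2, Function.update_of_ne hpp', Function.update_self]
  have hψ1p' : ψ1 p' = x' := by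
    rw [hψ1, Function.update_self]
  have eL : edgesWeight E α ψ1 =
      (1 / (1 + znorm (ψ1 y - ψ1 p') ^ t)) *
        ((1 / (1 + znorm (ψ1 y - ψ1 p) ^ s)) * R) := by
    rw [edgesWeight, ← Finset.mul_prod_erase E _ hmem',
        ← Finset.mul_prod_erase _ _ hmem2]
  have eR1 : edgesWeight (E.erase (y, p')) α' ψ1 =
      (1 / (1 + znorm (ψ1 y - ψ1 p) ^ (s + t))) * R := by
    rw [edgesWeight, ← Finset.mul_prod_erase _ _ hmem2]
    congr 1
    · rw [hα', Function.update_self]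
    · refine Finset.prod_congr rfl fun e he => ?_
      rw [hα', Function.update_of_ne (Finset.mem_erase.mp he).1]
  have eR2 : edgesWeight (E.erase (y, p')) α' ψ2 =
      (1 / (1 + znorm (ψ2 y - ψ2 p) ^ (s + t))) * R := by
    rw [edgesWeight, ← Finset.mul_prod_erase _ _ hmem2]
    congr 1
    · rw [hα', Function.update_self]
    · refine Finset.prod_congr rfl fun e he => ?_
      obtain ⟨h1, h2, h3, h4⟩ := hrest e he
      have hv : ψ2 e.1 - ψ2 e.2 = ψ1 e.1 - ψ1 e.2 := by
        rw [hψ1, hψ2]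
        rw [Function.update_of_ne h3, Function.update_of_ne h1,
            Function.update_of_ne h4, Function.update_of_ne h2,
            Function.update_of_ne h3, Function.update_of_ne h1,
            Function.update_of_ne h4, Function.update_of_ne h2]
      rw [hv, hα', Function.update_of_ne (Finset.mem_erase.mp he).1]
  rw [eL, eR1, eR2, hψ1y, hψ2y, hψ1p, hψ2p, hψ1p']
  have key := cut_scalar (znorm (φ y - x)) (znorm (φ y - x')) s t
    (znorm_nonneg _) (znorm_nonneg _)
  calc (1 / (1 + znorm (φ y - x') ^ t)) * ((1 / (1 + znorm (φ y - x) ^ s)) * R)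
      = ((1 / (1 + znorm (φ y - x') ^ t)) * (1 / (1 + znorm (φ y - x) ^ s))) * R := by
        ring
    _ ≤ (2 * (1 / (1 + znorm (φ y - x) ^ (s + t)) +
          1 / (1 + znorm (φ y - x') ^ (s + t)))) * R :=
        mul_le_mul_of_nonneg_right key hR0
    _ = 2 * ((1 / (1 + znorm (φ y - x) ^ (s + t))) * R +
          (1 / (1 + znorm (φ y - x') ^ (s + t))) * R) := by ring
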